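/- Let (Ω, Σ) and (Ω', Σ') be measurable spaces, H a separable complex Hilbert space, and let M₁ ∈ O_Σ(H) and M₂ ∈ O_{Σ'}(H) be jointly measurable observables. If M₁ is extremal in O_Σ(H) and M₂ is extremal in O_{Σ'}(H), then their unique joint observable M ∈ O_{Σ⊗Σ'}(H) is extremal in O_{Σ⊗Σ'}(H). -/

import Mathlib

open scoped ComplexOrder ComplexInnerProductSpace Topology

noncomputable section

/-- A normalized positive operator valued measure (POVM, observable) on the measurable
space `Ω` with values in `L(H)`: positive operator values, `M univ = 1`, and σ-additivity
in the weak operator topology. -/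
def IsPOVM {Ω : Type*} [MeasurableSpace Ω] {H : Type*}
    [NormedAddCommGroup H] [InnerProductSpace ℂ H] [CompleteSpace H]
    (M : Set Ω → H →L[ℂ] H) : Prop :=
  (∀ X : Set Ω, MeasurableSet X → (M X).IsPositive) ∧
  M Set.univ = 1 ∧
  ∀ f : ℕ → Set Ω, (∀ n, MeasurableSet (f n)) → Pairwise (Function.onFun Disjoint f) →
    ∀ x y : H, HasSum (fun n => ⟪x, M (f n) y⟫) ⟪x, M (⋃ n, f n) y⟫

/-- A POVM is extremal in the convex set of all POVMs on the same σ-algebra. -/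
def IsExtremalPOVM {Ω : Type*} [MeasurableSpace Ω] {H : Type*}
    [NormedAddCommGroup H] [InnerProductSpace ℂ H] [CompleteSpace H]
    (M : Set Ω → H →L[ℂ] H) : Prop :=
  IsPOVM M ∧ ∀ M₁ M₂ : Set Ω → H →L[ℂ] H, IsPOVM M₁ → IsPOVM M₂ →
    ∀ t : ℝ, 0 < t → t < 1 →
    (∀ X : Set Ω, MeasurableSet X → M X = (t : ℂ) • M₁ X + ((1 - t : ℝ) : ℂ) • M₂ X) →
    ∀ X : Set Ω, MeasurableSet X → M₁ X = M₂ X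

section Aux

variable {α : Type*} [MeasurableSpace α] {H : Type*}
    [NormedAddCommGroup H] [InnerProductSpace ℂ H] [CompleteSpace H]

lemma IsPOVM.empty' {M : Set α → H →L[ℂ] H} (hM : IsPOVM M) : M ∅ = 0 := by
  have h := hM.2.2 (fun _ => (∅ : Set α)) (fun _ => MeasurableSet.empty)
    (fun i j hij => by simp [Function.onFun])
  ext y
  refine ext_inner_left ℂ fun x => ?_
  have h1 := h x y
  rw [Set.iUnion_empty] at h1
  have h2 : Filter.Tendsto (fun _ : ℕ => ⟪x, M ∅ y⟫) Filter.atTop (nhds 0) :=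
    h1.summable.tendsto_atTop_zero
  have h3 := tendsto_nhds_unique h2 tendsto_const_nhds
  simp [← h3]

lemma IsPOVM.union' {M : Set α → H →L[ℂ] H} (hM : IsPOVM M) {A B : Set α}
    (hA : MeasurableSet A) (hB : MeasurableSet B) (hd : Disjoint A B) :
    M (A ∪ B) = M A + M B := by
  classical
  set f : ℕ → Set α := fun n => if n = 0 then A else if n = 1 then B else ∅ with hf
  have hfm : ∀ n, MeasurableSet (f n) := by
    intro n; simp only [hf]; split_ifs <;> simp [hA, hB]
  have hfd : Pairwise (Function.onFun Disjoint f) := by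
    intro i j hij
    simp only [Function.onFun, hf]
    split_ifs <;> simp_all [hd, hd.symm]
  have hU : (⋃ n, f n) = A ∪ B := by
    apply Set.Subset.antisymm
    · exact Set.iUnion_subset fun n => by
        simp only [hf]; split_ifs <;>
          simp [Set.subset_union_left, Set.subset_union_right]
    · intro z hz
      rcases hz with hz | hz
      · exact Set.mem_iUnion.2 ⟨0, by simp [hf, hz]⟩
      · exact Set.mem_iUnion.2 ⟨1, by simp [hf, hz]⟩
  ext y
  refine ext_inner_left ℂ fun x => ?_
  have h1 := hM.2.2 f hfm hfd x y
  rw [hU] at h1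
  have h2 : HasSum (fun n => ⟪x, M (f n) y⟫) (⟪x, M A y⟫ + ⟪x, M B y⟫) := by
    have hs := hasSum_sum_of_ne_finset_zero (s := ({0, 1} : Finset ℕ)) (L := SummationFilter.unconditional ℕ)
      (f := fun n => ⟪x, M (f n) y⟫) (by
        intro n hn
        simp only [Finset.mem_insert, Finset.mem_singleton, not_or] at hn
        simp [hf, hn.1, hn.2, hM.empty'])
    rw [Finset.sum_insert (by simp), Finset.sum_singleton] at hs
    simpa [hf] using hs
  have h3 := h1.unique h2
  simp [h3, ContinuousLinearMap.add_apply, inner_add_right]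

lemma pos_inner_re_nonneg {T : H →L[ℂ] H} (hT : T.IsPositive) (x : H) :
    0 ≤ (⟪x, T x⟫).re := hT.re_inner_nonneg_right x

lemma isPositive_of_re {T : H →L[ℂ] H} (h1 : IsSelfAdjoint T)
    (h2 : ∀ x : H, 0 ≤ (⟪x, T x⟫).re) : T.IsPositive := by
  refine ⟨h1.isSymmetric, fun x => ?_⟩
  rw [ContinuousLinearMap.reApplyInnerSelf_apply, ← inner_re_symm]
  exact h2 x

lemma IsSelfAdjoint.inner_self_re {T : H →L[ℂ] H} (hT : IsSelfAdjoint T) (x : H) :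
    ⟪x, T x⟫ = ((⟪x, T x⟫).re : ℂ) := by
  have h := hT.isSymmetric x x
  have hc : (starRingEnd ℂ) ⟪x, T x⟫ = ⟪x, T x⟫ := by
    rw [inner_conj_symm]; exact h
  exact (Complex.conj_eq_iff_re.1 hc).symm

/-- The finite measure `Z ↦ re ⟪x, M Z x⟫` associated to a POVM and a vector. -/
def povmMeasure (M : Set α → H →L[ℂ] H) (hM : IsPOVM M) (x : H) :
    MeasureTheory.Measure α :=
  MeasureTheory.Measure.ofMeasurable (fun s _ => ENNReal.ofReal (⟪x, M s x⟫).re)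
    (by simp [hM.empty'])
    (by
      intro f hfm hfd
      have h := hM.2.2 f hfm hfd x x
      have hre : HasSum (fun n => (⟪x, M (f n) x⟫).re) (⟪x, M (⋃ n, f n) x⟫).re :=
        Complex.hasSum_re h
      rw [← hre.tsum_eq]
      exact ENNReal.ofReal_tsum_of_nonneg
        (fun n => pos_inner_re_nonneg (hM.1 (f n) (hfm n)) x) hre.summable)

lemma povmMeasure_apply (M : Set α → H →L[ℂ] H) (hM : IsPOVM M) (x : H)
    {s : Set α} (hs : MeasurableSet s) :
    povmMeasure M hM x s = ENNReal.ofReal (⟪x, M s x⟫).re :=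
  MeasureTheory.Measure.ofMeasurable_apply s hs

instance povmMeasure_finite (M : Set α → H →L[ℂ] H) (hM : IsPOVM M) (x : H) :
    MeasureTheory.IsFiniteMeasure (povmMeasure M hM x) := by
  constructor
  rw [povmMeasure_apply M hM x MeasurableSet.univ]
  exact ENNReal.ofReal_lt_top

end Aux

section Prod

variable {Ω Ω' : Type*} [MeasurableSpace Ω] [MeasurableSpace Ω']
    {H : Type*} [NormedAddCommGroup H] [InnerProductSpace ℂ H] [CompleteSpace H]

/-- Two POVMs on a product measurable space that agree on measurable rectangles agree
on all measurable sets. -/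
lemma povm_ext_prod {M M' : Set (Ω × Ω') → H →L[ℂ] H} (hM : IsPOVM M) (hM' : IsPOVM M')
    (hrect : ∀ X : Set Ω, MeasurableSet X → ∀ Y : Set Ω', MeasurableSet Y →
      M (X ×ˢ Y) = M' (X ×ˢ Y)) :
    ∀ Z : Set (Ω × Ω'), MeasurableSet Z → M Z = M' Z := by
  intro Z hZ
  have key : ∀ x : H, (⟪x, M Z x⟫).re = (⟪x, M' Z x⟫).re := by
    intro x
    have hmeas : povmMeasure M hM x = povmMeasure M' hM' x := by
      refine MeasureTheory.ext_of_generate_finite _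
        generateFrom_prod.symm isPiSystem_prod ?_ ?_
      · rintro s ⟨X, hX, Y, hY, rfl⟩
        rw [povmMeasure_apply M hM x (MeasurableSet.prod hX hY),
          povmMeasure_apply M' hM' x (MeasurableSet.prod hX hY), hrect X hX Y hY]
      · rw [povmMeasure_apply M hM x MeasurableSet.univ,
          povmMeasure_apply M' hM' x MeasurableSet.univ, hM.2.1, hM'.2.1]
    have h := congrArg (fun μ : MeasureTheory.Measure (Ω × Ω') => μ Z) hmeas
    simp only [povmMeasure_apply M hM x hZ, povmMeasure_apply M' hM' x hZ] at h
    exact (ENNReal.ofReal_eq_ofReal_iff (pos_inner_re_nonneg (hM.1 Z hZ) x)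
      (pos_inner_re_nonneg (hM'.1 Z hZ) x)).1 h
  have hz : ∀ x : H, ⟪((M Z - M' Z : H →L[ℂ] H) : H →ₗ[ℂ] H) x, x⟫ = 0 := by
    intro x
    have h1 : ⟪x, M Z x⟫ = ⟪x, M' Z x⟫ := by
      rw [(hM.1 Z hZ).isSelfAdjoint.inner_self_re x,
        (hM'.1 Z hZ).isSelfAdjoint.inner_self_re x, key x]
    have h2 : ⟪x, (M Z - M' Z) x⟫ = 0 := by
      simp [ContinuousLinearMap.sub_apply, inner_sub_right, h1]
    calc ⟪((M Z - M' Z : H →L[ℂ] H) : H →ₗ[ℂ] H) x, x⟫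
        = (starRingEnd ℂ) ⟪x, (M Z - M' Z) x⟫ := by
          rw [inner_conj_symm]; rfl
      _ = 0 := by rw [h2]; simp
  have h0 : ((M Z - M' Z : H →L[ℂ] H) : H →ₗ[ℂ] H) = 0 :=
    (inner_map_self_eq_zero _).1 hz
  have h0' : (M Z - M' Z : H →L[ℂ] H) = 0 := by
    ext x
    have := congrArg (fun T : H →ₗ[ℂ] H => T x) h0
    simpa using this
  exact sub_eq_zero.1 h0'

/-- The first marginal of a POVM on a product space is a POVM. -/
lemma marginal_fst_povm {N : Set (Ω × Ω') → H →L[ℂ] H} (hN : IsPOVM N) :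
    IsPOVM (fun X : Set Ω => N (X ×ˢ (Set.univ : Set Ω'))) := by
  refine ⟨fun X hX => hN.1 _ (hX.prod MeasurableSet.univ),
    by simpa [Set.univ_prod_univ] using hN.2.1, ?_⟩
  intro f hfm hfd x y
  have h := hN.2.2 (fun n => f n ×ˢ (Set.univ : Set Ω'))
    (fun n => (hfm n).prod MeasurableSet.univ)
    (fun i j hij => Set.Disjoint.set_prod_left (hfd hij) _ _) x y
  rw [← Set.iUnion_prod_const] at h
  exact h

/-- The second marginal of a POVM on a product space is a POVM. -/
lemma marginal_snd_povm {N : Set (Ω × Ω') → H →L[ℂ] H} (hN : IsPOVM N) :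
    IsPOVM (fun Y : Set Ω' => N ((Set.univ : Set Ω) ×ˢ Y)) := by
  refine ⟨fun Y hY => hN.1 _ (MeasurableSet.univ.prod hY),
    by simpa [Set.univ_prod_univ] using hN.2.1, ?_⟩
  intro f hfm hfd x y
  have h := hN.2.2 (fun n => (Set.univ : Set Ω) ×ˢ f n)
    (fun n => MeasurableSet.univ.prod (hfm n))
    (fun i j hij => Set.Disjoint.set_prod_right (hfd hij) _ _) x y
  rw [← Set.prod_iUnion] at h
  exact h

/-- Key lemma: if the first marginal `M₁` is extremal, then any two joint observables
with first marginal `M₁` and equal second marginals agree on measurable rectangles. -/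
lemma joint_rect_unique (M₁ : Set Ω → H →L[ℂ] H) (hext₁ : IsExtremalPOVM M₁)
    (M M' : Set (Ω × Ω') → H →L[ℂ] H) (hM : IsPOVM M) (hM' : IsPOVM M')
    (hm₁ : ∀ X : Set Ω, MeasurableSet X → M (X ×ˢ (Set.univ : Set Ω')) = M₁ X)
    (hm₁' : ∀ X : Set Ω, MeasurableSet X → M' (X ×ˢ (Set.univ : Set Ω')) = M₁ X)
    (heq2 : ∀ Y : Set Ω', MeasurableSet Y →
      M ((Set.univ : Set Ω) ×ˢ Y) = M' ((Set.univ : Set Ω) ×ˢ Y)) :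
    ∀ X : Set Ω, MeasurableSet X → ∀ Y : Set Ω', MeasurableSet Y →
      M (X ×ˢ Y) = M' (X ×ˢ Y) := by
  have hM₁ : IsPOVM M₁ := hext₁.1
  intro X₀ hX₀ Y hY
  -- splitting along Y
  have hsplit : ∀ (N : Set (Ω × Ω') → H →L[ℂ] H), IsPOVM N →
      (∀ X : Set Ω, MeasurableSet X → N (X ×ˢ (Set.univ : Set Ω')) = M₁ X) →
      ∀ X : Set Ω, MeasurableSet X → M₁ X = N (X ×ˢ Y) + N (X ×ˢ Yᶜ) := by
    intro N hN hNm X hX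
    rw [← hNm X hX]
    have hXY : X ×ˢ (Set.univ : Set Ω') = (X ×ˢ Y) ∪ (X ×ˢ Yᶜ) := by
      rw [← Set.prod_union]; simp
    rw [hXY, hN.union' (hX.prod hY) (hX.prod hY.compl)
      (Set.Disjoint.set_prod_right disjoint_compl_right _ _)]
  set P : Set Ω → H →L[ℂ] H := fun X => M₁ X + M (X ×ˢ Y) - M' (X ×ˢ Y) with hPdef
  set Q : Set Ω → H →L[ℂ] H := fun X => M₁ X + M' (X ×ˢ Y) - M (X ×ˢ Y) with hQdef
  have hsum : ∀ (A B : Set (Ω × Ω') → H →L[ℂ] H), IsPOVM A → IsPOVM B →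
      ∀ f : ℕ → Set Ω, (∀ n, MeasurableSet (f n)) → Pairwise (Function.onFun Disjoint f) →
      ∀ x y : H,
      HasSum (fun n => ⟪x, (M₁ (f n) + A (f n ×ˢ Y) - B (f n ×ˢ Y)) y⟫)
        ⟪x, (M₁ (⋃ n, f n) + A ((⋃ n, f n) ×ˢ Y) - B ((⋃ n, f n) ×ˢ Y)) y⟫ := by
    intro A B hA hB f hfm hfd x y
    have hg : ∀ n, MeasurableSet ((f n) ×ˢ Y) := fun n => (hfm n).prod hY
    have hgd : Pairwise (Function.onFun Disjoint fun n => (f n) ×ˢ Y) :=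
      fun i j hij => Set.Disjoint.set_prod_left (hfd hij) _ _
    have h1 := hM₁.2.2 f hfm hfd x y
    have h2 := hA.2.2 _ hg hgd x y
    have h3 := hB.2.2 _ hg hgd x y
    rw [← Set.iUnion_prod_const] at h2 h3
    have h := (h1.add h2).sub h3
    simpa [ContinuousLinearMap.add_apply, ContinuousLinearMap.sub_apply,
      inner_add_right, inner_sub_right] using h
  have hpos : ∀ (A B : Set (Ω × Ω') → H →L[ℂ] H), IsPOVM A → IsPOVM B →
      (∀ X : Set Ω, MeasurableSet X → B (X ×ˢ (Set.univ : Set Ω')) = M₁ X) →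
      ∀ X : Set Ω, MeasurableSet X →
        (M₁ X + A (X ×ˢ Y) - B (X ×ˢ Y)).IsPositive := by
    intro A B hA hB hBm X hX
    have hXY := hX.prod hY
    refine isPositive_of_re
      (((hM₁.1 X hX).isSelfAdjoint.add (hA.1 _ hXY).isSelfAdjoint).sub
        (hB.1 _ hXY).isSelfAdjoint) (fun x => ?_)
    have hs := hsplit B hB hBm X hX
    have : ⟪x, (M₁ X + A (X ×ˢ Y) - B (X ×ˢ Y)) x⟫
        = ⟪x, B (X ×ˢ Yᶜ) x⟫ + ⟪x, A (X ×ˢ Y) x⟫ := by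
      rw [hs]
      simp only [ContinuousLinearMap.add_apply, ContinuousLinearMap.sub_apply,
        inner_add_right, inner_sub_right]
      ring
    rw [this]
    simp only [Complex.add_re]
    exact add_nonneg (pos_inner_re_nonneg (hB.1 _ (hX.prod hY.compl)) x)
      (pos_inner_re_nonneg (hA.1 _ hXY) x)
  have hunivP : ∀ (A B : Set (Ω × Ω') → H →L[ℂ] H),
      IsPOVM A → (A ((Set.univ : Set Ω) ×ˢ Y) = B ((Set.univ : Set Ω) ×ˢ Y)) →
      M₁ Set.univ + A ((Set.univ : Set Ω) ×ˢ Y) - B ((Set.univ : Set Ω) ×ˢ Y) = 1 := by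
    intro A B _ hAB
    rw [hAB, hM₁.2.1, add_sub_cancel_right]
  have hP : IsPOVM P :=
    ⟨fun X hX => hpos M M' hM hM' hm₁' X hX,
     hunivP M M' hM (heq2 Y hY),
     fun f hfm hfd x y => hsum M M' hM hM' f hfm hfd x y⟩
  have hQ : IsPOVM Q :=
    ⟨fun X hX => hpos M' M hM' hM hm₁ X hX,
     hunivP M' M hM' (heq2 Y hY).symm,
     fun f hfm hfd x y => hsum M' M hM' hM f hfm hfd x y⟩
  have hdec : ∀ X : Set Ω, MeasurableSet X →
      M₁ X = ((1/2 : ℝ) : ℂ) • P X + ((1 - (1/2 : ℝ) : ℝ) : ℂ) • Q X := by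
    intro X hX
    have hPQ : P X + Q X = (2 : ℂ) • M₁ X := by
      simp only [hPdef, hQdef]
      rw [two_smul]
      abel
    have hco : ((1 - (1/2 : ℝ) : ℝ) : ℂ) = ((1/2 : ℝ) : ℂ) := by norm_num
    rw [hco, ← smul_add, hPQ, smul_smul]
    norm_num
  have hPQeq := hext₁.2 P Q hP hQ (1/2) (by norm_num) (by norm_num) hdec X₀ hX₀
  -- from P X₀ = Q X₀ deduce the claim
  have he : M (X₀ ×ˢ Y) - M' (X₀ ×ˢ Y) = M' (X₀ ×ˢ Y) - M (X₀ ×ˢ Y) := by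
    have h1 : M₁ X₀ + (M (X₀ ×ˢ Y) - M' (X₀ ×ˢ Y))
        = M₁ X₀ + (M' (X₀ ×ˢ Y) - M (X₀ ×ˢ Y)) := by
      have := hPQeq
      simp only [hPdef, hQdef] at this
      rw [add_sub_assoc, add_sub_assoc] at this
      exact this
    exact add_left_cancel h1
  have h2 : (2 : ℂ) • (M (X₀ ×ˢ Y) - M' (X₀ ×ˢ Y)) = 0 := by
    rw [two_smul]
    nth_rewrite 2 [he]
    simp
  have h3 : M (X₀ ×ˢ Y) - M' (X₀ ×ˢ Y) = 0 := by
    rcases smul_eq_zero.1 h2 with h | h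
    · exact absurd h (by norm_num)
    · exact h
  exact sub_eq_zero.1 h3

end Prod

/-- **Extremality of the joint observable** (item (e) of the paper). -/
theorem joint_observable_extremal_of_extremal_marginals
    {Ω Ω' : Type*} [MeasurableSpace Ω] [MeasurableSpace Ω']
    {H : Type*} [NormedAddCommGroup H] [InnerProductSpace ℂ H] [CompleteSpace H]
    [TopologicalSpace.SeparableSpace H]
    (M₁ : Set Ω → H →L[ℂ] H) (M₂ : Set Ω' → H →L[ℂ] H)
    (hM₁ : IsPOVM M₁) (hM₂ : IsPOVM M₂)
    (M : Set (Ω × Ω') → H →L[ℂ] H) (hM : IsPOVM M)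
    (hmarg₁ : ∀ X : Set Ω, MeasurableSet X → M (X ×ˢ (Set.univ : Set Ω')) = M₁ X)
    (hmarg₂ : ∀ Y : Set Ω', MeasurableSet Y → M ((Set.univ : Set Ω) ×ˢ Y) = M₂ Y)
    (hext₁ : IsExtremalPOVM M₁) (hext₂ : IsExtremalPOVM M₂) :
    (∀ M' : Set (Ω × Ω') → H →L[ℂ] H, IsPOVM M' →
      (∀ X : Set Ω, MeasurableSet X → M' (X ×ˢ (Set.univ : Set Ω')) = M₁ X) →
      (∀ Y : Set Ω', MeasurableSet Y → M' ((Set.univ : Set Ω) ×ˢ Y) = M₂ Y) →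
      ∀ Z : Set (Ω × Ω'), MeasurableSet Z → M' Z = M Z) ∧
    IsExtremalPOVM M := by
  constructor
  · -- uniqueness
    intro M' hM' h1' h2' Z hZ
    have heq2 : ∀ Y : Set Ω', MeasurableSet Y →
        M ((Set.univ : Set Ω) ×ˢ Y) = M' ((Set.univ : Set Ω) ×ˢ Y) := by
      intro Y hY; rw [hmarg₂ Y hY, h2' Y hY]
    have hrect := joint_rect_unique M₁ hext₁ M M' hM hM' hmarg₁ h1' heq2
    exact povm_ext_prod hM' hM
      (fun X hX Y hY => (hrect X hX Y hY).symm) Z hZ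
  · -- extremality
    refine ⟨hM, ?_⟩
    intro N₁ N₂ hN₁ hN₂ t ht0 ht1 hdec Z hZ
    -- marginals of N₁ and N₂ coincide with M₁ resp. M₂
    have hmargfst : ∀ (N : Set (Ω × Ω') → H →L[ℂ] H), IsPOVM N → True := fun _ _ => trivial
    have hA₁ := marginal_fst_povm hN₁
    have hA₂ := marginal_fst_povm hN₂
    have hB₁ := marginal_snd_povm hN₁
    have hB₂ := marginal_snd_povm hN₂
    have hdec₁ : ∀ X : Set Ω, MeasurableSet X →
        M₁ X = (t : ℂ) • N₁ (X ×ˢ (Set.univ : Set Ω'))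
          + ((1 - t : ℝ) : ℂ) • N₂ (X ×ˢ (Set.univ : Set Ω')) := by
      intro X hX
      rw [← hmarg₁ X hX]
      exact hdec _ (hX.prod MeasurableSet.univ)
    have hdec₂ : ∀ Y : Set Ω', MeasurableSet Y →
        M₂ Y = (t : ℂ) • N₁ ((Set.univ : Set Ω) ×ˢ Y)
          + ((1 - t : ℝ) : ℂ) • N₂ ((Set.univ : Set Ω) ×ˢ Y) := by
      intro Y hY
      rw [← hmarg₂ Y hY]
      exact hdec _ (MeasurableSet.univ.prod hY)
    have hAeq := hext₁.2 _ _ hA₁ hA₂ t ht0 ht1 hdec₁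
    have hBeq := hext₂.2 _ _ hB₁ hB₂ t ht0 ht1 hdec₂
    have hcoef : ∀ (a : H →L[ℂ] H), (t : ℂ) • a + ((1 - t : ℝ) : ℂ) • a = a := by
      intro a
      rw [← add_smul]
      have : ((t : ℝ) : ℂ) + ((1 - t : ℝ) : ℂ) = 1 := by push_cast; ring
      rw [this, one_smul]
    have hm₁N₁ : ∀ X : Set Ω, MeasurableSet X →
        N₁ (X ×ˢ (Set.univ : Set Ω')) = M₁ X := by
      intro X hX
      rw [hdec₁ X hX, ← hAeq X hX, hcoef]
    have hm₁N₂ : ∀ X : Set Ω, MeasurableSet X →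
        N₂ (X ×ˢ (Set.univ : Set Ω')) = M₁ X := by
      intro X hX
      rw [hdec₁ X hX, hAeq X hX, hcoef]
    have hm₂N₁ : ∀ Y : Set Ω', MeasurableSet Y →
        N₁ ((Set.univ : Set Ω) ×ˢ Y) = M₂ Y := by
      intro Y hY
      rw [hdec₂ Y hY, ← hBeq Y hY, hcoef]
    have hm₂N₂ : ∀ Y : Set Ω', MeasurableSet Y →
        N₂ ((Set.univ : Set Ω) ×ˢ Y) = M₂ Y := by
      intro Y hY
      rw [hdec₂ Y hY, hBeq Y hY, hcoef]
    have heq2 : ∀ Y : Set Ω', MeasurableSet Y →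
        N₁ ((Set.univ : Set Ω) ×ˢ Y) = N₂ ((Set.univ : Set Ω) ×ˢ Y) := by
      intro Y hY; rw [hm₂N₁ Y hY, hm₂N₂ Y hY]
    have hrect := joint_rect_unique M₁ hext₁ N₁ N₂ hN₁ hN₂ hm₁N₁ hm₁N₂ heq2
    exact povm_ext_prod hN₁ hN₂ hrect Z hZ
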